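/- Let G be a Borel graph on a Polish space X (i.e., G is a symmetric irreflexive Borel subset of X × X) and let k be a natural number such that every vertex x ∈ X has at most k neighbors in G. Then G admits a Borel proper (k+1)-coloring, i.e., χ_B(G) ≤ k + 1. -/

import Mathlib

open MeasureTheory Set

section Novikov
variable {α : Type*} [TopologicalSpace α] [PolishSpace α] [MeasurableSpace α] [BorelSpace α]

omit [MeasurableSpace α] [BorelSpace α] in
lemma analyticSet_inter {s t : Set α} (hs : AnalyticSet s) (ht : AnalyticSet t) :
    AnalyticSet (s ∩ t) := by
  have : s ∩ t = ⋂ b : Bool, (if b then s else t) := by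
    ext x; simp [Bool.forall_bool, and_comm]
  rw [this]
  exact AnalyticSet.iInter (fun b => by cases b <;> simpa)

lemma analyticSet_inter_measurable {s t : Set α} (hs : AnalyticSet s) (ht : MeasurableSet t) :
    AnalyticSet (s ∩ t) :=
  analyticSet_inter hs ht.analyticSet

/-- Finite Novikov separation from Lusin separation. -/
lemma novikov_fin : ∀ (m : ℕ) (A : Fin m → Set α), (∀ i, AnalyticSet (A i)) →
    (⋂ i, A i) = ∅ → ∃ B : Fin m → Set α,
      (∀ i, MeasurableSet (B i)) ∧ (∀ i, A i ⊆ B i) ∧ (⋂ i, B i) = ∅ := by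
  intro m
  induction m with
  | zero =>
    intro A _ h
    exact ⟨A, fun i => i.elim0, fun i => i.elim0, h⟩
  | succ n IH =>
    match n, IH with
    | 0, _ =>
      intro A _ h
      refine ⟨fun _ => ∅, fun _ => MeasurableSet.empty, fun i => ?_, by
        rw [Set.iInter_const]⟩
      fin_cases i
      rw [← h]
      intro x hx
      rw [mem_iInter]
      intro i
      fin_cases i
      exact hx
    | (nn+1), IH =>
      intro A hA h
      set A' : Fin (nn + 1) → Set α := Fin.cases (A 0 ∩ A 1) (fun j => A j.succ.succ) with hA'
      have hA'0 : A' 0 = A 0 ∩ A 1 := rfl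
      have hA's : ∀ j : Fin nn, A' j.succ = A j.succ.succ := fun j => by
        simp only [hA', Fin.cases_succ]
      have hA'a : ∀ i, AnalyticSet (A' i) := by
        intro i
        refine Fin.cases ?_ (fun j => ?_) i
        · rw [hA'0]; exact analyticSet_inter (hA 0) (hA 1)
        · rw [hA's j]; exact hA j.succ.succ
      have h1succ : ((0 : Fin (nn+1)).succ : Fin (nn+2)) = 1 := Fin.succ_zero_eq_one
      have hiA' : (⋂ i, A' i) = ∅ := by
        rw [← h]
        ext x
        simp only [mem_iInter]
        constructor
        · intro hx i
          refine Fin.cases ?_ (fun j => ?_) i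
          · exact ((hA'0 ▸ hx 0) : x ∈ A 0 ∩ A 1).1
          · refine Fin.cases ?_ (fun jj => ?_) j
            · rw [h1succ]
              exact ((hA'0 ▸ hx 0) : x ∈ A 0 ∩ A 1).2
            · rw [← hA's jj]; exact hx jj.succ
        · intro hx i
          refine Fin.cases ?_ (fun j => ?_) i
          · rw [hA'0]
            exact ⟨hx 0, hx 1⟩
          · rw [hA's j]; exact hx _
      obtain ⟨B', hB'm, hB'sub, hB'e⟩ := IH A' hA'a hiA'
      set C := B' 0 with hC
      have h01 : A 0 ∩ A 1 ⊆ C := hA'0 ▸ hB'sub 0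
      have hsep : MeasurablySeparable (A 0 ∩ Cᶜ) (A 1 ∩ Cᶜ) := by
        apply AnalyticSet.measurablySeparable
        · exact analyticSet_inter_measurable (hA 0) (hB'm 0).compl
        · exact analyticSet_inter_measurable (hA 1) (hB'm 0).compl
        · rw [Set.disjoint_left]
          rintro x ⟨h0, hc⟩ ⟨h1, -⟩
          exact hc (h01 ⟨h0, h1⟩)
      obtain ⟨D, hD1, hD2, hDm⟩ := hsep
      set B : Fin (nn+2) → Set α :=
        Fin.cases (C ∪ D) (Fin.cases (C ∪ Dᶜ) (fun j => B' j.succ)) with hB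
      have hB0 : B 0 = C ∪ D := rfl
      have hB1 : B 1 = C ∪ Dᶜ := by
        rw [← h1succ]
        simp only [hB, Fin.cases_succ, Fin.cases_zero]
      have hBss : ∀ j : Fin nn, B j.succ.succ = B' j.succ := fun j => by
        simp only [hB, Fin.cases_succ]
      refine ⟨B, ?_, ?_, ?_⟩
      · intro i
        refine Fin.cases ?_ (fun j => ?_) i
        · rw [hB0]; exact (hB'm 0).union hDm
        · refine Fin.cases ?_ (fun jj => ?_) j
          · rw [h1succ, hB1]
            exact (hB'm 0).union hDm.compl
          · rw [hBss jj]; exact hB'm jj.succ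
      · intro i
        refine Fin.cases ?_ (fun j => ?_) i
        · rw [hB0]
          intro x hx
          by_cases hc : x ∈ C
          · exact Or.inl hc
          · exact Or.inr (hD1 ⟨hx, hc⟩)
        · refine Fin.cases ?_ (fun jj => ?_) j
          · rw [h1succ, hB1]
            intro x hx
            by_cases hc : x ∈ C
            · exact Or.inl hc
            · exact Or.inr fun hd => (Set.disjoint_left.1 hD2) ⟨hx, hc⟩ hd
          · rw [hBss jj, ← hA's jj]
            exact hB'sub jj.succ
      · ext x
        simp only [mem_iInter, mem_empty_iff_false, iff_false, not_forall]
        by_contra hcon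
        push_neg at hcon
        have hx0 : x ∈ C ∪ D := hB0 ▸ hcon 0
        have hx1 : x ∈ C ∪ Dᶜ := hB1 ▸ hcon 1
        have hxC : x ∈ C := by
          rcases hx0 with h' | h'
          · exact h'
          · rcases hx1 with h'' | h''
            · exact h''
            · exact absurd h' h''
        have : x ∈ ⋂ i, B' i := by
          rw [mem_iInter]
          intro i
          refine Fin.cases hxC (fun j => ?_) i
          rw [← hBss j]
          exact hcon j.succ.succ
        rw [hB'e] at this
        exact this
end Novikov

section Crux

open Metric

variable {X : Type} [MetricSpace X] [CompleteSpace X] [SecondCountableTopology X]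
  [MeasurableSpace X] [BorelSpace X]

/-- the radii we use -/
noncomputable def rad (m : ℕ) : ℝ := 1 / (m + 1)

lemma rad_pos (m : ℕ) : 0 < rad m := by
  have : (0:ℝ) < m + 1 := by positivity
  simpa [rad] using this

/-- basic balls -/
def bal (z : ℕ → X) (b : ℕ × ℕ) : Set X := ball (z b.1) (rad b.2)

/-- closed basic balls -/
def cbal (z : ℕ → X) (b : ℕ × ℕ) : Set X := closedBall (z b.1) (rad b.2)

lemma rad_small : ∀ ε : ℝ, 0 < ε → ∃ m : ℕ, rad m < ε := by
  intro ε hε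
  obtain ⟨m, hm⟩ := exists_nat_one_div_lt hε
  exact ⟨m, by simpa [rad] using hm⟩

variable (G : X → X → Prop) (k : ℕ)

/-- projection of G against a set -/
def NbrIn (S : Set X) : Set X := {x | ∃ y, G x y ∧ y ∈ S}

lemma analytic_NbrIn (hBorel : MeasurableSet {p : X × X | G p.1 p.2})
    {S : Set X} (hS : MeasurableSet S) : AnalyticSet (NbrIn G S) := by
  have heq : NbrIn G S = Prod.fst '' ({p : X × X | G p.1 p.2} ∩ Set.univ ×ˢ S) := by
    ext x
    simp only [NbrIn, Set.mem_setOf_eq, Set.mem_image, Set.mem_inter_iff, Set.mem_prod,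
      Set.mem_univ, true_and]
    constructor
    · rintro ⟨y, h1, h2⟩; exact ⟨(x, y), ⟨h1, h2⟩, rfl⟩
    · rintro ⟨⟨a, b⟩, ⟨h1, h2⟩, rfl⟩; exact ⟨b, h1, h2⟩
  rw [heq]
  exact ((hBorel.inter (MeasurableSet.univ.prod hS)).analyticSet).image_of_continuous
    continuous_fst

lemma NbrIn_mono {S T : Set X} (h : S ⊆ T) : NbrIn G S ⊆ NbrIn G T := by
  rintro x ⟨y, h1, h2⟩; exact ⟨y, h1, h h2⟩

/-- the key envelope system -/
lemma exists_W (z : ℕ → X) (hBorel : MeasurableSet {p : X × X | G p.1 p.2})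
    (hdeg : ∀ x, ∃ s : Finset X, (∀ y, G x y → y ∈ s) ∧ s.card ≤ k) :
    ∃ W : ℕ × ℕ → Set X,
      (∀ b, MeasurableSet (W b)) ∧
      (∀ b, NbrIn G (bal z b) ⊆ W b) ∧
      (∀ b b', bal z b ⊆ bal z b' → W b ⊆ W b') ∧
      (∀ τ : Fin (k+1) → ℕ × ℕ, (∀ i j, i ≠ j → Disjoint (bal z (τ i)) (bal z (τ j))) →
        (⋂ i, W (τ i)) = ∅) := by
  classical
  have hPempty : ∀ τ : Fin (k+1) → ℕ × ℕ,
      (∀ i j, i ≠ j → Disjoint (bal z (τ i)) (bal z (τ j))) →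
      (⋂ i, NbrIn G (bal z (τ i))) = ∅ := by
    intro τ hτ
    ext x
    simp only [Set.mem_iInter, Set.mem_empty_iff_false, iff_false, not_forall]
    by_contra hcon
    push_neg at hcon
    choose y hy1 hy2 using hcon
    have hinj : Function.Injective y := by
      intro i j hij
      by_contra hne
      exact Set.disjoint_left.1 (hτ i j hne) (hy2 i) (hij ▸ hy2 j)
    obtain ⟨s, hs1, hs2⟩ := hdeg x
    have hsub : Finset.image y Finset.univ ⊆ s := by
      intro v hv
      simp only [Finset.mem_image] at hv
      obtain ⟨i, _, rfl⟩ := hv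
      exact hs1 _ (hy1 i)
    have : k + 1 ≤ k := by
      calc k + 1 = (Finset.univ : Finset (Fin (k+1))).card := by simp
        _ = (Finset.image y Finset.univ).card := (Finset.card_image_of_injective _ hinj).symm
        _ ≤ s.card := Finset.card_le_card hsub
        _ ≤ k := hs2
    omega
  have hBt : ∀ τ : Fin (k+1) → ℕ × ℕ, ∃ Bt : Fin (k+1) → Set X,
      (∀ i, MeasurableSet (Bt i)) ∧ (∀ i, NbrIn G (bal z (τ i)) ⊆ Bt i) ∧
      ((∀ i j, i ≠ j → Disjoint (bal z (τ i)) (bal z (τ j))) → (⋂ i, Bt i) = ∅) := by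
    intro τ
    by_cases hτ : ∀ i j, i ≠ j → Disjoint (bal z (τ i)) (bal z (τ j))
    · obtain ⟨B, h1, h2, h3⟩ := novikov_fin (k+1) (fun i => NbrIn G (bal z (τ i)))
        (fun i => analytic_NbrIn G hBorel isOpen_ball.measurableSet) (hPempty τ hτ)
      exact ⟨B, h1, h2, fun _ => h3⟩
    · exact ⟨fun _ => Set.univ, fun _ => MeasurableSet.univ,
        fun _ => Set.subset_univ _, fun h => absurd h hτ⟩
  choose Bt hBtm hBtsub hBte using hBt
  set B : ℕ × ℕ → Set X := fun b =>
    ⋂ (τ : Fin (k+1) → ℕ × ℕ) (i : Fin (k+1)), if τ i = b then Bt τ i else Set.univ with hB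
  have hBm : ∀ b, MeasurableSet (B b) := by
    intro b
    refine MeasurableSet.iInter fun τ => MeasurableSet.iInter fun i => ?_
    split
    · exact hBtm τ i
    · exact MeasurableSet.univ
  have hPB : ∀ b, NbrIn G (bal z b) ⊆ B b := by
    intro b x hx
    simp only [hB, Set.mem_iInter]
    intro τ i
    split
    · next h => exact hBtsub τ i (h ▸ hx)
    · trivial
  have hBe : ∀ τ : Fin (k+1) → ℕ × ℕ,
      (∀ i j, i ≠ j → Disjoint (bal z (τ i)) (bal z (τ j))) → (⋂ i, B (τ i)) = ∅ := by
    intro τ hτ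
    have hsub : (⋂ i, B (τ i)) ⊆ ⋂ i, Bt τ i := by
      intro x hx
      rw [Set.mem_iInter] at hx ⊢
      intro i
      have := hx i
      simp only [hB, Set.mem_iInter] at this
      have := this τ i
      simpa using this
    rw [← Set.subset_empty_iff]
    exact hsub.trans (le_of_eq (hBte τ hτ))
  refine ⟨fun b => ⋂ b', if bal z b ⊆ bal z b' then B b' else Set.univ, ?_, ?_, ?_, ?_⟩
  · intro b
    refine MeasurableSet.iInter fun b' => ?_
    split
    · exact hBm b'
    · exact MeasurableSet.univ
  · intro b x hx
    simp only [Set.mem_iInter]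
    intro b'
    split
    · next h => exact hPB b' (NbrIn_mono G h hx)
    · trivial
  · intro b b' hbb' x hx
    simp only [Set.mem_iInter] at hx ⊢
    intro b''
    split
    · next h =>
      have := hx b''
      rw [if_pos (hbb'.trans h)] at this
      exact this
    · trivial
  · intro τ hτ
    rw [← Set.subset_empty_iff, ← hBe τ hτ]
    intro x hx
    rw [Set.mem_iInter] at hx ⊢
    intro i
    have := hx i
    simp only [Set.mem_iInter] at this
    have := this (τ i)
    rw [if_pos (subset_refl _)] at this
    exact this

end Crux

section Seq

variable {Y : Type*} [MetricSpace Y]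

lemma cover_of_sep_bound (y : ℕ → Y) (ε : ℝ) (hε : 0 < ε) :
    ∀ (k : ℕ) (S : Set ℕ),
      (∀ s : Finset ℕ, ↑s ⊆ S →
        (∀ m ∈ s, ∀ m' ∈ s, m ≠ m' → ε ≤ dist (y m) (y m')) → s.card ≤ k) →
      ∃ t : Finset Y, ∀ m ∈ S, ∃ c ∈ t, dist (y m) c < ε := by
  classical
  intro k
  induction k with
  | zero =>
    intro S hS
    refine ⟨∅, fun m hm => ?_⟩
    have := hS {m} (by simpa using hm) (by
      intro a ha b hb hab
      simp only [Finset.mem_singleton] at ha hb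
      exact absurd (ha.trans hb.symm) hab)
    simp at this
  | succ k IH =>
    intro S hS
    by_cases hSe : S = ∅
    · exact ⟨∅, fun m hm => by simp [hSe] at hm⟩
    · obtain ⟨m₀, hm₀⟩ := Set.nonempty_iff_ne_empty.2 hSe
      set S' : Set ℕ := {m ∈ S | ε ≤ dist (y m) (y m₀)} with hS'
      have hbound : ∀ s : Finset ℕ, ↑s ⊆ S' →
          (∀ m ∈ s, ∀ m' ∈ s, m ≠ m' → ε ≤ dist (y m) (y m')) → s.card ≤ k := by
        intro s hsub hsep
        have hm₀s : m₀ ∉ s := by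
          intro hmem
          have := (hsub hmem).2
          simp at this
          linarith
        have hins : ((insert m₀ s : Finset ℕ) : Set ℕ) ⊆ S := by
          intro a ha
          simp only [Finset.coe_insert, Set.mem_insert_iff] at ha
          rcases ha with rfl | ha
          · exact hm₀
          · exact (hsub ha).1
        have hsep' : ∀ m ∈ insert m₀ s, ∀ m' ∈ insert m₀ s, m ≠ m' →
            ε ≤ dist (y m) (y m') := by
          intro m hm m' hm' hne
          simp only [Finset.mem_insert] at hm hm'
          rcases hm with rfl | hm
          · rcases hm' with rfl | hm'
            · exact absurd rfl hne
            · rw [dist_comm]; exact (hsub hm').2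
          · rcases hm' with rfl | hm'
            · exact (hsub hm).2
            · exact hsep m hm m' hm' hne
        have := hS _ hins hsep'
        rw [Finset.card_insert_of_notMem hm₀s] at this
        omega
      obtain ⟨t', ht'⟩ := IH S' hbound
      refine ⟨insert (y m₀) t', fun m hm => ?_⟩
      by_cases hd : dist (y m) (y m₀) < ε
      · exact ⟨y m₀, Finset.mem_insert_self _ _, hd⟩
      · obtain ⟨c, hc1, hc2⟩ := ht' m ⟨hm, le_of_not_gt hd⟩
        exact ⟨c, Finset.mem_insert_of_mem hc1, hc2⟩

lemma exists_cauchy_subseq [CompleteSpace Y] (y : ℕ → Y) (k : ℕ)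
    (h : ∀ ε : ℝ, 0 < ε → ∃ M : ℕ, ∀ s : Finset ℕ, (∀ m ∈ s, M ≤ m) →
      (∀ m ∈ s, ∀ m' ∈ s, m ≠ m' → ε ≤ dist (y m) (y m')) → s.card ≤ k) :
    ∃ φ : ℕ → ℕ, StrictMono φ ∧ ∃ p : Y, Filter.Tendsto (y ∘ φ) Filter.atTop (nhds p) := by
  classical
  have claim : ∀ S : Set ℕ, S.Infinite → ∀ j : ℕ, ∃ T : Set ℕ,
      T ⊆ S ∧ T.Infinite ∧ ∃ c, ∀ m ∈ T, dist (y m) c < rad j := by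
    intro S hSinf j
    obtain ⟨M, hM⟩ := h (rad j) (rad_pos j)
    set S' : Set ℕ := S ∩ {m | M ≤ m} with hS'
    have hS'inf : S'.Infinite := by
      have : S' = S \ {m | m < M} := by
        ext a; simp [hS', Nat.not_lt, Set.mem_diff]
      rw [this]
      exact hSinf.diff (Set.finite_Iio M)
    obtain ⟨t, ht⟩ := cover_of_sep_bound y (rad j) (rad_pos j) k S' (by
      intro s hsub hsep
      exact hM s (fun m hm => (hsub hm).2) hsep)
    have : ∃ c ∈ t, (S' ∩ {m | dist (y m) c < rad j}).Infinite := by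
      by_contra hcon
      push_neg at hcon
      have : S' ⊆ ⋃ c ∈ t, (S' ∩ {m | dist (y m) c < rad j}) := by
        intro m hm
        obtain ⟨c, hc1, hc2⟩ := ht m hm
        exact Set.mem_biUnion hc1 ⟨hm, hc2⟩
      exact hS'inf ((Set.Finite.biUnion t.finite_toSet (fun c hc => hcon c hc)).subset this)
    obtain ⟨c, _, hcinf⟩ := this
    exact ⟨S' ∩ {m | dist (y m) c < rad j}, fun m hm => hm.1.1, hcinf,
      c, fun m hm => hm.2⟩
  choose Tf hT1 hT2 hT3 using claim
  set Tf' : Set ℕ → ℕ → Set ℕ := fun S j => if hS : S.Infinite then Tf S hS j else Set.univ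
    with hTf'
  set g : ℕ → Set ℕ := fun j => Nat.rec Set.univ (fun j prev => Tf' prev j) j with hg
  have gsucc : ∀ j, g (j+1) = Tf' (g j) j := fun _ => rfl
  have ginf : ∀ j, (g j).Infinite := by
    intro j
    induction j with
    | zero => exact Set.infinite_univ
    | succ j ih =>
      rw [gsucc, hTf']
      simp only [dif_pos ih]
      exact hT2 _ ih j
  have gsub : ∀ j, g (j+1) ⊆ g j := by
    intro j
    rw [gsucc, hTf']
    simp only [dif_pos (ginf j)]
    exact hT1 _ (ginf j) j
  have gchain : ∀ j j', j ≤ j' → g j' ⊆ g j := by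
    intro j j' hle
    induction hle with
    | refl => exact subset_rfl
    | step h ih => exact (gsub _).trans ih
  have gball : ∀ j, ∃ c, ∀ m ∈ g (j+1), dist (y m) c < rad j := by
    intro j
    rw [gsucc, hTf']
    simp only [dif_pos (ginf j)]
    exact hT3 _ (ginf j) j
  set φ : ℕ → ℕ := fun j => Nat.rec (((ginf 1).exists_gt 0).choose)
    (fun j prev => (((ginf (j+2)).exists_gt prev).choose)) j with hφ
  have hφ0 : φ 0 ∈ g 1 := ((ginf 1).exists_gt 0).choose_spec.1
  have hφsucc : ∀ j, φ (j+1) ∈ g (j+2) ∧ φ j < φ (j+1) := by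
    intro j
    have := ((ginf (j+2)).exists_gt (φ j)).choose_spec
    exact ⟨this.1, this.2⟩
  have hφmem : ∀ j, φ j ∈ g (j+1) := by
    intro j
    cases j with
    | zero => exact hφ0
    | succ j => exact (hφsucc j).1
  have hmono : StrictMono φ := strictMono_nat_of_lt_succ (fun j => (hφsucc j).2)
  have hcauchy : CauchySeq (y ∘ φ) := by
    rw [Metric.cauchySeq_iff']
    intro ε hε
    obtain ⟨j, hj⟩ := rad_small (ε/2) (by linarith)
    refine ⟨j, fun n hn => ?_⟩
    rcases eq_or_lt_of_le hn with rfl | hlt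
    · simp [hε]
    · obtain ⟨c, hc⟩ := gball j
      have h1 : φ n ∈ g (j+1) := gchain (j+1) (n+1) (by omega) (hφmem n)
      have h2 : φ j ∈ g (j+1) := hφmem j
      calc dist ((y ∘ φ) n) ((y ∘ φ) j) ≤ dist (y (φ n)) c + dist c (y (φ j)) :=
            dist_triangle _ _ _
        _ < rad j + rad j := by
            rw [dist_comm c]
            exact add_lt_add (hc _ h1) (hc _ h2)
        _ < ε := by linarith
  exact ⟨φ, hmono, cauchySeq_tendsto_of_complete hcauchy⟩

end Seq

section Crux2

open Metric

variable {X : Type} [MetricSpace X] [CompleteSpace X] [SecondCountableTopology X]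
  [MeasurableSpace X] [BorelSpace X]

variable (z : ℕ → X) (W : ℕ × ℕ → Set X)

/-- the envelope multifunction -/
def StE (x : X) : Set X := {y | ∀ b, y ∈ bal z b → x ∈ W b}

/-- Borel code for `{x | StE x ∩ C ≠ ∅}` -/
def MM (C : Set X) : Set X :=
  ⋂ m : ℕ, ⋃ b : {b : ℕ × ℕ // rad b.2 < rad m ∧ (bal z b ∩ C).Nonempty}, W b.val

lemma small_ball (hz : DenseRange z) (y : X) {ε : ℝ} (hε : 0 < ε) :
    ∃ b : ℕ × ℕ, dist y (z b.1) < rad b.2 ∧ rad b.2 < ε := by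
  obtain ⟨m, hm⟩ := rad_small ε hε
  obtain ⟨a, ha⟩ := hz.exists_dist_lt y (rad_pos m)
  exact ⟨(a, m), ha, hm⟩

lemma rad_antitone {m m' : ℕ} (h : m ≤ m') : rad m' ≤ rad m := by
  have h1 : (0:ℝ) < m + 1 := by positivity
  have h2 : (m:ℝ) + 1 ≤ (m':ℝ) + 1 := by exact_mod_cast by omega
  exact one_div_le_one_div_of_le h1 h2

lemma measurable_MM (hWm : ∀ b, MeasurableSet (W b)) (C : Set X) :
    MeasurableSet (MM z W C) :=
  MeasurableSet.iInter fun _ => MeasurableSet.iUnion fun b => hWm b.val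

lemma mem_StE_of_G (G : X → X → Prop)
    (hWP : ∀ b, NbrIn G (bal z b) ⊆ W b) {x y : X} (h : G x y) : y ∈ StE z W x :=
  fun b hb => hWP b ⟨y, h, hb⟩

variable (k : ℕ)

lemma mem_MM_iff (hz : DenseRange z)
    (hWmono : ∀ b b', bal z b ⊆ bal z b' → W b ⊆ W b')
    (hWdisj : ∀ τ : Fin (k+1) → ℕ × ℕ,
      (∀ i j, i ≠ j → Disjoint (bal z (τ i)) (bal z (τ j))) → (⋂ i, W (τ i)) = ∅)
    (C : Set X) (hC : IsClosed C) (x : X) :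
    x ∈ MM z W C ↔ (StE z W x ∩ C).Nonempty := by
  constructor
  · intro hx
    simp only [MM, Set.mem_iInter, Set.mem_iUnion] at hx
    choose b hb using hx
    -- b : ℕ → {b // rad b.2 < rad m ∧ (bal z b ∩ C).Nonempty}
    have hrad : ∀ m, rad (b m).val.2 < rad m := fun m => (b m).property.1
    have hxW : ∀ m, x ∈ W (b m).val := hb
    have hy : ∀ m, ∃ y, y ∈ bal z (b m).val ∩ C := fun m => (b m).property.2
    choose y hy1 hy2 using fun m => hy m
    -- extract a Cauchy subsequence
    have hcs : ∃ φ : ℕ → ℕ, StrictMono φ ∧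
        ∃ p : X, Filter.Tendsto (y ∘ φ) Filter.atTop (nhds p) := by
      apply exists_cauchy_subseq y k
      intro ε hε
      obtain ⟨M, hM⟩ := rad_small (ε/4) (by linarith)
      refine ⟨M, fun s hs hsep => ?_⟩
      by_contra hcard
      push_neg at hcard
      obtain ⟨u, hus, hucard⟩ := Finset.exists_subset_card_eq (by omega : k + 1 ≤ s.card)
      set e := u.orderIsoOfFin hucard with he
      set τ : Fin (k+1) → ℕ × ℕ := fun i => (b (e i).val).val with hτ
      have hdisj : ∀ i j, i ≠ j → Disjoint (bal z (τ i)) (bal z (τ j))  := by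
        intro i j hij
        have hne : ((e i : ℕ)) ≠ ((e j : ℕ)) := by
          intro hcon
          apply hij
          have : (e i : ℕ) = (e j : ℕ) := hcon
          exact e.injective (Subtype.ext this)
        have hmi : (e i : ℕ) ∈ s := hus (e i).property
        have hmj : (e j : ℕ) ∈ s := hus (e j).property
        have hsep' : ε ≤ dist (y (e i : ℕ)) (y (e j : ℕ)) := hsep _ hmi _ hmj hne
        rw [Set.disjoint_left]
        intro w hw1 hw2
        have hri : rad ((b (e i : ℕ)).val).2 < ε/4 :=
          lt_of_lt_of_le (hrad _) (le_trans (rad_antitone (hs _ hmi)) (le_of_lt hM))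
        have hrj : rad ((b (e j : ℕ)).val).2 < ε/4 :=
          lt_of_lt_of_le (hrad _) (le_trans (rad_antitone (hs _ hmj)) (le_of_lt hM))
        have d1 : dist (y (e i : ℕ)) w < ε/2 := by
          have h1 : dist (y (e i : ℕ)) (z ((b (e i : ℕ)).val).1) < rad ((b (e i : ℕ)).val).2 :=
            hy1 _
          have h2 : dist w (z ((b (e i : ℕ)).val).1) < rad ((b (e i : ℕ)).val).2 := hw1
          calc dist (y (e i : ℕ)) w ≤
              dist (y (e i : ℕ)) (z ((b (e i : ℕ)).val).1) + dist (z ((b (e i : ℕ)).val).1) w :=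
                dist_triangle _ _ _
            _ < ε/4 + ε/4 := by rw [dist_comm (z _)]; exact add_lt_add (h1.trans hri) (h2.trans hri)
            _ = ε/2 := by ring
        have d2 : dist w (y (e j : ℕ)) < ε/2 := by
          have h1 : dist (y (e j : ℕ)) (z ((b (e j : ℕ)).val).1) < rad ((b (e j : ℕ)).val).2 :=
            hy1 _
          have h2 : dist w (z ((b (e j : ℕ)).val).1) < rad ((b (e j : ℕ)).val).2 := hw2
          calc dist w (y (e j : ℕ)) ≤
              dist w (z ((b (e j : ℕ)).val).1) + dist (z ((b (e j : ℕ)).val).1) (y (e j : ℕ)) :=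
                dist_triangle _ _ _
            _ < ε/4 + ε/4 := by rw [dist_comm (z _)]; exact add_lt_add (h2.trans hrj) (h1.trans hrj)
            _ = ε/2 := by ring
        have : dist (y (e i : ℕ)) (y (e j : ℕ)) < ε :=
          calc dist (y (e i : ℕ)) (y (e j : ℕ)) ≤ dist (y (e i : ℕ)) w + dist w (y (e j : ℕ)) :=
                dist_triangle _ _ _
            _ < ε/2 + ε/2 := add_lt_add d1 d2
            _ = ε := by ring
        linarith
      have : x ∈ ⋂ i, W (τ i) := Set.mem_iInter.2 fun i => hxW _
      rw [hWdisj τ hdisj] at this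
      exact this
    obtain ⟨φ, hφ, p, hp⟩ := hcs
    refine ⟨p, ?_, hC.mem_of_tendsto hp (Filter.Eventually.of_forall fun t => hy2 _)⟩
    intro b' hpb'
    have hε' : 0 < rad b'.2 - dist p (z b'.1) := by
      rw [bal, mem_ball] at hpb'
      linarith
    set ε' := rad b'.2 - dist p (z b'.1) with hε'def
    obtain ⟨t1, ht1⟩ := Metric.tendsto_atTop.1 hp (ε'/4) (by linarith)
    obtain ⟨t2, ht2⟩ := rad_small (ε'/8) (by linarith)
    set t := max t1 t2 with ht
    have hdy : dist (y (φ t)) p < ε'/4 := ht1 t (le_max_left _ _)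
    have hrt : rad ((b (φ t)).val).2 < ε'/8 := by
      have h1 : rad ((b (φ t)).val).2 < rad (φ t) := hrad _
      have h2 : rad (φ t) ≤ rad t := rad_antitone (hφ.le_apply)
      have h3 : rad t ≤ rad t2 := rad_antitone (le_max_right _ _)
      linarith
    have hsub : bal z (b (φ t)).val ⊆ bal z b' := by
      intro w hw
      rw [bal, mem_ball]
      have h1 : dist w (y (φ t)) < ε'/4 := by
        have ha : dist w (z ((b (φ t)).val).1) < rad ((b (φ t)).val).2 := hw
        have hb' : dist (y (φ t)) (z ((b (φ t)).val).1) < rad ((b (φ t)).val).2 := hy1 _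
        calc dist w (y (φ t)) ≤
            dist w (z ((b (φ t)).val).1) + dist (z ((b (φ t)).val).1) (y (φ t)) :=
              dist_triangle _ _ _
          _ < ε'/8 + ε'/8 := by
              rw [dist_comm (z _)]
              exact add_lt_add (ha.trans hrt) (hb'.trans hrt)
          _ = ε'/4 := by ring
      calc dist w (z b'.1) ≤ dist w (y (φ t)) + dist (y (φ t)) p + dist p (z b'.1) :=
            dist_triangle4 _ _ _ _
        _ < rad b'.2 := by
            have hd : dist p (z b'.1) = rad b'.2 - ε' := by rw [hε'def]; ring
            linarith
    exact hWmono _ _ hsub (hxW (φ t))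
  · rintro ⟨y, hySt, hyC⟩
    simp only [MM, Set.mem_iInter, Set.mem_iUnion]
    intro m
    obtain ⟨b, hb1, hb2⟩ := small_ball z hz y (rad_pos m)
    have hymem : y ∈ bal z b := by rw [bal, mem_ball]; exact hb1
    exact ⟨⟨b, hb2, ⟨y, hymem, hyC⟩⟩, hySt b hymem⟩

end Crux2

section Crux3

open Metric

variable {X : Type} [MetricSpace X] [CompleteSpace X] [SecondCountableTopology X]
  [MeasurableSpace X] [BorelSpace X]

variable (z : ℕ → X) (W : ℕ × ℕ → Set X) (k : ℕ)

/-- separated families of points admit disjoint basic balls -/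
lemma StE_card_le (hz : DenseRange z)
    (hWdisj : ∀ τ : Fin (k+1) → ℕ × ℕ,
      (∀ i j, i ≠ j → Disjoint (bal z (τ i)) (bal z (τ j))) → (⋂ i, W (τ i)) = ∅)
    (x : X) (s : Finset X) (hs : ↑s ⊆ StE z W x) : s.card ≤ k := by
  classical
  by_contra hcard
  push_neg at hcard
  obtain ⟨u, hus, hucard⟩ := Finset.exists_subset_card_eq (by omega : k + 1 ≤ s.card)
  -- minimum pairwise distance
  have hsep : ∃ δ : ℝ, 0 < δ ∧ ∀ a ∈ u, ∀ c ∈ u, a ≠ c → δ ≤ dist a c := by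
    set P := (u ×ˢ u).filter (fun p : X × X => p.1 ≠ p.2) with hP
    by_cases hPe : P = ∅
    · refine ⟨1, one_pos, fun a ha c hc hac => ?_⟩
      exfalso
      have hmem : (a, c) ∈ P := by
        rw [hP, Finset.mem_filter, Finset.mem_product]
        exact ⟨⟨ha, hc⟩, hac⟩
      rw [hPe] at hmem
      simp at hmem
    · have hPne : P.Nonempty := Finset.nonempty_iff_ne_empty.2 hPe
      set img := P.image (fun p : X × X => dist p.1 p.2) with himg
      have himgne : img.Nonempty := hPne.image _
      refine ⟨img.min' himgne, ?_, ?_⟩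
      · obtain ⟨p, hp1, hp2⟩ := Finset.mem_image.1 (img.min'_mem himgne)
        rw [hP, Finset.mem_filter] at hp1
        rw [← hp2]
        exact dist_pos.2 hp1.2
      · intro a ha c hc hac
        apply Finset.min'_le
        rw [himg, Finset.mem_image]
        refine ⟨(a, c), ?_, rfl⟩
        rw [hP, Finset.mem_filter, Finset.mem_product]
        exact ⟨⟨ha, hc⟩, hac⟩
  obtain ⟨δ, hδ, hδsep⟩ := hsep
  have hcard' : Fintype.card {a // a ∈ u} = k + 1 := by
    simpa [Fintype.card_coe] using hucard
  have e := (Fintype.equivFinOfCardEq hcard').symm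
  have hball : ∀ i : Fin (k+1), ∃ b : ℕ × ℕ,
      dist ((e i : X)) (z b.1) < rad b.2 ∧ rad b.2 < δ/4 :=
    fun i => small_ball z hz _ (by linarith)
  choose b hb1 hb2 using hball
  have hdisj : ∀ i j, i ≠ j → Disjoint (bal z (b i)) (bal z (b j)) := by
    intro i j hij
    have hne : (e i : X) ≠ (e j : X) := by
      intro hcon
      exact hij (e.injective (Subtype.ext hcon))
    have hdd : δ ≤ dist (e i : X) (e j : X) := hδsep _ (e i).property _ (e j).property hne
    rw [Set.disjoint_left]
    intro w hw1 hw2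
    have d1 : dist (e i : X) w < δ/2 :=
      calc dist (e i : X) w ≤ dist (e i : X) (z (b i).1) + dist (z (b i).1) w :=
            dist_triangle _ _ _
        _ < δ/4 + δ/4 := by
            rw [dist_comm (z _)]
            exact add_lt_add ((hb1 i).trans (hb2 i)) ((show dist w (z (b i).1) < rad (b i).2
              from hw1).trans (hb2 i))
        _ = δ/2 := by ring
    have d2 : dist w (e j : X) < δ/2 :=
      calc dist w (e j : X) ≤ dist w (z (b j).1) + dist (z (b j).1) (e j : X) :=
            dist_triangle _ _ _
        _ < δ/4 + δ/4 := by
            rw [dist_comm (z _)]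
            exact add_lt_add ((show dist w (z (b j).1) < rad (b j).2 from hw2).trans (hb2 j))
              ((hb1 j).trans (hb2 j))
        _ = δ/2 := by ring
    have : dist (e i : X) (e j : X) < δ :=
      calc dist (e i : X) (e j : X) ≤ dist (e i : X) w + dist w (e j : X) := dist_triangle _ _ _
        _ < δ/2 + δ/2 := add_lt_add d1 d2
        _ = δ := by ring
    linarith
  have hmem : x ∈ ⋂ i, W (b i) := by
    rw [Set.mem_iInter]
    intro i
    have : (e i : X) ∈ StE z W x := hs (hus (e i).property)
    exact this (b i) (by rw [bal, mem_ball]; exact hb1 i)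
  rw [hWdisj b hdisj] at hmem
  exact hmem

lemma StE_finite (hz : DenseRange z)
    (hWdisj : ∀ τ : Fin (k+1) → ℕ × ℕ,
      (∀ i j, i ≠ j → Disjoint (bal z (τ i)) (bal z (τ j))) → (⋂ i, W (τ i)) = ∅)
    (x : X) : (StE z W x).Finite := by
  by_contra hinf
  have hinf' : (StE z W x).Infinite := hinf
  obtain ⟨t, hts, htfin, htcard⟩ := hinf'.exists_subset_ncard_eq (k+1)
  have hcard := StE_card_le z W k hz hWdisj x htfin.toFinset
    (by rw [Set.Finite.coe_toFinset]; exact hts)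
  rw [Set.ncard_eq_toFinset_card _ htfin] at htcard
  omega

/-- `x`'s such that `StE x ∩ cbal b` is a singleton -/
def Sing (b : ℕ × ℕ) : Set X := {x | ∃ y, StE z W x ∩ cbal z b = {y}}

open Classical in
/-- the selector functions -/
noncomputable def fsel (b : ℕ × ℕ) (x : X) : X :=
  if h : ∃ y, StE z W x ∩ cbal z b = {y} then h.choose else x

lemma fsel_spec {b : ℕ × ℕ} {x : X} (h : x ∈ Sing z W b) :
    StE z W x ∩ cbal z b = {fsel z W b x} := by
  have h' : ∃ y, StE z W x ∩ cbal z b = {y} := h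
  rw [fsel, dif_pos h']
  exact h'.choose_spec

lemma fsel_of_not {b : ℕ × ℕ} {x : X} (h : x ∉ Sing z W b) : fsel z W b x = x := by
  have h' : ¬ ∃ y, StE z W x ∩ cbal z b = {y} := h
  rw [fsel, dif_neg h']

end Crux3

section Crux4

open Metric

variable {X : Type} [MetricSpace X] [CompleteSpace X] [SecondCountableTopology X]
  [MeasurableSpace X] [BorelSpace X]

variable (z : ℕ → X) (W : ℕ × ℕ → Set X) (k : ℕ)

lemma cbal_closed (b : ℕ × ℕ) : IsClosed (cbal z b) := isClosed_closedBall

lemma mem_cbal_of_close {b : ℕ × ℕ} {y : X} (h : dist y (z b.1) < rad b.2) : y ∈ cbal z b :=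
  mem_closedBall.2 h.le

lemma meas_nonempty_inter_open (hz : DenseRange z)
    (hWm : ∀ b, MeasurableSet (W b))
    (hWmono : ∀ b b', bal z b ⊆ bal z b' → W b ⊆ W b')
    (hWdisj : ∀ τ : Fin (k+1) → ℕ × ℕ,
      (∀ i j, i ≠ j → Disjoint (bal z (τ i)) (bal z (τ j))) → (⋂ i, W (τ i)) = ∅)
    (C : Set X) (hC : IsClosed C) (U : Set X) (hU : IsOpen U) :
    MeasurableSet {x | (StE z W x ∩ C ∩ U).Nonempty} := by
  have heq : {x | (StE z W x ∩ C ∩ U).Nonempty} =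
      ⋃ (b : ℕ × ℕ) (_ : cbal z b ⊆ U), MM z W (C ∩ cbal z b) := by
    ext x
    simp only [Set.mem_setOf_eq, Set.mem_iUnion]
    constructor
    · rintro ⟨y, ⟨hySt, hyC⟩, hyU⟩
      obtain ⟨r, hr, hball⟩ := Metric.isOpen_iff.1 hU y hyU
      obtain ⟨b, hb1, hb2⟩ := small_ball z hz y (by linarith : (0:ℝ) < r/3)
      refine ⟨b, ?_, ?_⟩
      · intro w hw
        apply hball
        rw [mem_ball]
        calc dist w y ≤ dist w (z b.1) + dist (z b.1) y := dist_triangle _ _ _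
          _ ≤ rad b.2 + rad b.2 := by
              rw [dist_comm (z _)]
              exact add_le_add (mem_closedBall.1 hw) hb1.le
          _ < r := by linarith
      · rw [mem_MM_iff z W k hz hWmono hWdisj _ (hC.inter (cbal_closed z b))]
        exact ⟨y, hySt, hyC, mem_cbal_of_close z hb1⟩
    · rintro ⟨b, hsub, hmem⟩
      rw [mem_MM_iff z W k hz hWmono hWdisj _ (hC.inter (cbal_closed z b))] at hmem
      obtain ⟨y, hySt, hyC, hycb⟩ := hmem
      exact ⟨y, ⟨hySt, hyC⟩, hsub hycb⟩
  rw [heq]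
  exact MeasurableSet.iUnion fun b => MeasurableSet.iUnion fun _ => measurable_MM z W hWm _

lemma meas_Sing (hz : DenseRange z)
    (hWm : ∀ b, MeasurableSet (W b))
    (hWmono : ∀ b b', bal z b ⊆ bal z b' → W b ⊆ W b')
    (hWdisj : ∀ τ : Fin (k+1) → ℕ × ℕ,
      (∀ i j, i ≠ j → Disjoint (bal z (τ i)) (bal z (τ j))) → (⋂ i, W (τ i)) = ∅)
    (b : ℕ × ℕ) : MeasurableSet (Sing z W b) := by
  set Two : Set X := ⋃ (p : (ℕ × ℕ) × (ℕ × ℕ)) (_ : Disjoint (cbal z p.1) (cbal z p.2)),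
    (MM z W (cbal z b ∩ cbal z p.1) ∩ MM z W (cbal z b ∩ cbal z p.2)) with hTwo
  have heq : Sing z W b = MM z W (cbal z b) \ Two := by
    ext x
    constructor
    · rintro ⟨y, hy⟩
      constructor
      · rw [mem_MM_iff z W k hz hWmono hWdisj _ (cbal_closed z b)]
        exact ⟨y, by rw [hy]; exact rfl⟩
      · intro hmem
        rw [hTwo] at hmem
        simp only [Set.mem_iUnion] at hmem
        obtain ⟨p, hdisj, h1, h2⟩ := hmem
        rw [mem_MM_iff z W k hz hWmono hWdisj _
          ((cbal_closed z b).inter (cbal_closed z p.1))] at h1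
        rw [mem_MM_iff z W k hz hWmono hWdisj _
          ((cbal_closed z b).inter (cbal_closed z p.2))] at h2
        obtain ⟨y₁, hy₁St, hy₁b, hy₁p⟩ := h1
        obtain ⟨y₂, hy₂St, hy₂b, hy₂p⟩ := h2
        have e1 : y₁ = y := by
          have : y₁ ∈ StE z W x ∩ cbal z b := ⟨hy₁St, hy₁b⟩
          rw [hy] at this; exact this
        have e2 : y₂ = y := by
          have : y₂ ∈ StE z W x ∩ cbal z b := ⟨hy₂St, hy₂b⟩
          rw [hy] at this; exact this
        exact Set.disjoint_left.1 hdisj hy₁p (by rw [e1, ← e2]; exact hy₂p)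
    · rintro ⟨hmem, hnot⟩
      rw [mem_MM_iff z W k hz hWmono hWdisj _ (cbal_closed z b)] at hmem
      obtain ⟨y, hySt, hycb⟩ := hmem
      refine ⟨y, ?_⟩
      have huniq : ∀ w ∈ StE z W x ∩ cbal z b, w = y := by
        rintro w ⟨hwSt, hwcb⟩
        by_contra hne
        have hδ : 0 < dist w y := dist_pos.2 hne
        obtain ⟨b₁, hb₁1, hb₁2⟩ := small_ball z hz w (by linarith : (0:ℝ) < dist w y / 8)
        obtain ⟨b₂, hb₂1, hb₂2⟩ := small_ball z hz y (by linarith : (0:ℝ) < dist w y / 8)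
        have hdisj : Disjoint (cbal z b₁) (cbal z b₂) := by
          rw [Set.disjoint_left]
          intro v hv1 hv2
          have : dist w y < dist w y :=
            calc dist w y ≤ dist w (z b₁.1) + dist (z b₁.1) v + dist v (z b₂.1)
                  + dist (z b₂.1) y := by
                    calc dist w y ≤ dist w v + dist v y := dist_triangle _ _ _
                      _ ≤ (dist w (z b₁.1) + dist (z b₁.1) v) +
                          (dist v (z b₂.1) + dist (z b₂.1) y) :=
                        add_le_add (dist_triangle _ _ _) (dist_triangle _ _ _)
                      _ = _ := by ring
              _ < dist w y / 8 + dist w y / 8 + dist w y / 8 + dist w y / 8 := by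
                  have h1 : dist w (z b₁.1) < dist w y / 8 := hb₁1.trans hb₁2
                  have h2 : dist (z b₁.1) v ≤ rad b₁.2 := by
                    rw [dist_comm]; exact mem_closedBall.1 hv1
                  have h3 : dist v (z b₂.1) ≤ rad b₂.2 := mem_closedBall.1 hv2
                  have h4 : dist (z b₂.1) y < dist w y / 8 := by
                    rw [dist_comm]; exact hb₂1.trans hb₂2
                  have h2' : dist (z b₁.1) v < dist w y / 8 := lt_of_le_of_lt h2 hb₁2
                  have h3' : dist v (z b₂.1) < dist w y / 8 := lt_of_le_of_lt h3 hb₂2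
                  linarith
              _ = dist w y / 2 := by ring
              _ < dist w y := by linarith
          exact absurd this (lt_irrefl _)
        apply hnot
        rw [hTwo]
        simp only [Set.mem_iUnion]
        refine ⟨(b₁, b₂), hdisj, ?_, ?_⟩
        · rw [mem_MM_iff z W k hz hWmono hWdisj _
            ((cbal_closed z b).inter (cbal_closed z b₁))]
          exact ⟨w, hwSt, hwcb, mem_cbal_of_close z hb₁1⟩
        · rw [mem_MM_iff z W k hz hWmono hWdisj _
            ((cbal_closed z b).inter (cbal_closed z b₂))]
          exact ⟨y, hySt, hycb, mem_cbal_of_close z hb₂1⟩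
      ext w
      constructor
      · intro hw; exact huniq w hw
      · intro hw
        rw [Set.mem_singleton_iff] at hw
        rw [hw]
        exact ⟨hySt, hycb⟩
  rw [heq, hTwo]
  exact ((measurable_MM z W hWm _).diff
    (MeasurableSet.iUnion fun p => MeasurableSet.iUnion fun _ =>
      (measurable_MM z W hWm _).inter (measurable_MM z W hWm _)))

lemma meas_fsel (hz : DenseRange z)
    (hWm : ∀ b, MeasurableSet (W b))
    (hWmono : ∀ b b', bal z b ⊆ bal z b' → W b ⊆ W b')
    (hWdisj : ∀ τ : Fin (k+1) → ℕ × ℕ,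
      (∀ i j, i ≠ j → Disjoint (bal z (τ i)) (bal z (τ j))) → (⋂ i, W (τ i)) = ∅)
    (b : ℕ × ℕ) : Measurable (fsel z W b) := by
  apply measurable_of_isOpen
  intro U hU
  have heq : fsel z W b ⁻¹' U =
      (Sing z W b ∩ {x | (StE z W x ∩ cbal z b ∩ U).Nonempty}) ∪
      ((Sing z W b)ᶜ ∩ U) := by
    ext x
    simp only [Set.mem_preimage, Set.mem_union, Set.mem_inter_iff, Set.mem_compl_iff,
      Set.mem_setOf_eq]
    by_cases hx : x ∈ Sing z W b
    · have hs := fsel_spec z W hx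
      constructor
      · intro hfU
        refine Or.inl ⟨hx, fsel z W b x, ?_, hfU⟩
        rw [hs]; exact rfl
      · rintro (⟨-, w, hw1, hw2⟩ | ⟨hc, -⟩)
        · have : w = fsel z W b x := by rw [hs] at hw1; exact hw1
          rw [← this]; exact hw2
        · exact absurd hx hc
    · rw [fsel_of_not z W hx]
      constructor
      · intro hxU; exact Or.inr ⟨hx, hxU⟩
      · rintro (⟨hc, -⟩ | ⟨-, hxU⟩)
        · exact absurd hc hx
        · exact hxU
  rw [heq]
  exact ((meas_Sing z W k hz hWm hWmono hWdisj b).inter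
      (meas_nonempty_inter_open z W k hz hWm hWmono hWdisj _ (cbal_closed z b) U hU)).union
    ((meas_Sing z W k hz hWm hWmono hWdisj b).compl.inter hU.measurableSet)

lemma fsel_cover (hz : DenseRange z) (G : X → X → Prop)
    (hWP : ∀ b, NbrIn G (bal z b) ⊆ W b)
    (hWdisj : ∀ τ : Fin (k+1) → ℕ × ℕ,
      (∀ i j, i ≠ j → Disjoint (bal z (τ i)) (bal z (τ j))) → (⋂ i, W (τ i)) = ∅)
    (x y : X) (hxy : G x y) : ∃ b, fsel z W b x = y := by
  classical
  have hySt : y ∈ StE z W x := mem_StE_of_G z W G hWP hxy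
  have hfin : (StE z W x).Finite := StE_finite z W k hz hWdisj x
  have hδ : ∃ δ : ℝ, 0 < δ ∧ ∀ w ∈ StE z W x, w ≠ y → δ ≤ dist y w := by
    set T := hfin.toFinset.filter (· ≠ y) with hT
    by_cases hTe : T = ∅
    · refine ⟨1, one_pos, fun w hw hne => ?_⟩
      exfalso
      have : w ∈ T := by
        rw [hT, Finset.mem_filter, Set.Finite.mem_toFinset]
        exact ⟨hw, hne⟩
      rw [hTe] at this
      simp at this
    · have hTne : T.Nonempty := Finset.nonempty_iff_ne_empty.2 hTe
      set img := T.image (fun w => dist y w) with himg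
      have himgne : img.Nonempty := hTne.image _
      refine ⟨img.min' himgne, ?_, ?_⟩
      · obtain ⟨w, hw1, hw2⟩ := Finset.mem_image.1 (img.min'_mem himgne)
        rw [hT, Finset.mem_filter] at hw1
        rw [← hw2]
        rw [dist_comm]
        exact dist_pos.2 hw1.2
      · intro w hw hne
        apply Finset.min'_le
        rw [himg, Finset.mem_image]
        refine ⟨w, ?_, rfl⟩
        rw [hT, Finset.mem_filter, Set.Finite.mem_toFinset]
        exact ⟨hw, hne⟩
  obtain ⟨δ, hδpos, hδ⟩ := hδ
  obtain ⟨b, hb1, hb2⟩ := small_ball z hz y (by linarith : (0:ℝ) < δ/4)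
  have heq : StE z W x ∩ cbal z b = {y} := by
    ext w
    constructor
    · rintro ⟨hwSt, hwcb⟩
      rw [Set.mem_singleton_iff]
      by_contra hne
      have hd : δ ≤ dist y w := hδ w hwSt hne
      have : dist y w < δ :=
        calc dist y w ≤ dist y (z b.1) + dist (z b.1) w := dist_triangle _ _ _
          _ < δ/4 + δ/4 := by
              rw [dist_comm (z _)]
              exact add_lt_add_of_lt_of_le (hb1.trans hb2)
                ((mem_closedBall.1 hwcb).trans (le_of_lt hb2))
          _ < δ := by linarith
      linarith
    · intro hw
      rw [Set.mem_singleton_iff] at hw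
      rw [hw]
      exact ⟨hySt, mem_cbal_of_close z hb1⟩
  have hSing : x ∈ Sing z W b := ⟨y, heq⟩
  refine ⟨b, ?_⟩
  have := fsel_spec z W hSing
  rw [heq] at this
  exact (Set.singleton_eq_singleton_iff.1 this).symm

/-- THE countable Borel family of functions covering `G`. -/
lemma exists_nbhd_funs (G : X → X → Prop) (k : ℕ)
    (hBorel : MeasurableSet {p : X × X | G p.1 p.2})
    (hdeg : ∀ x, ∃ s : Finset X, (∀ y, G x y → y ∈ s) ∧ s.card ≤ k) [Nonempty X] :
    ∃ f : ℕ × ℕ → X → X, (∀ b, Measurable (f b)) ∧ ∀ x y, G x y → ∃ b, f b x = y := by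
  have hz : DenseRange (TopologicalSpace.denseSeq X) := TopologicalSpace.denseRange_denseSeq X
  obtain ⟨W, hWm, hWP, hWmono, hWdisj⟩ :=
    exists_W G k (TopologicalSpace.denseSeq X) hBorel hdeg
  exact ⟨fsel (TopologicalSpace.denseSeq X) W,
    fun b => meas_fsel _ W k hz hWm hWmono hWdisj b,
    fun x y hxy => fsel_cover _ W k hz G hWP hWdisj x y hxy⟩

end Crux4

section Coloring

open Metric

variable {X : Type} [MetricSpace X] [CompleteSpace X] [SecondCountableTopology X]
  [MeasurableSpace X] [BorelSpace X]

theorem coloring_exists (G : X → X → Prop) (hsym : Symmetric G) (hirr : Irreflexive G)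
    (hBorel : MeasurableSet {p : X × X | G p.1 p.2}) (k : ℕ)
    (hdeg : ∀ x, ∃ s : Finset X, (∀ y, G x y → y ∈ s) ∧ s.card ≤ k)
    (z : ℕ → X) (hz : DenseRange z)
    (f : ℕ × ℕ → X → X) (hf : ∀ b, Measurable (f b))
    (hcov : ∀ x y, G x y → ∃ b, f b x = y) :
    ∃ c : X → Fin (k + 1), Measurable c ∧ ∀ x y, G x y → c x ≠ c y := by
  classical
  set en : ℕ → ℕ × ℕ := fun n => (Denumerable.eqv (ℕ × ℕ)).symm n with hen
  have hGb : ∀ b, MeasurableSet {x | G x (f b x)} := by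
    intro b
    have heq : {x | G x (f b x)} = (fun x => (x, f b x)) ⁻¹' {p : X × X | G p.1 p.2} := rfl
    rw [heq]
    exact (measurable_id.prodMk (hf b)) hBorel
  set P : X → ℕ → Prop := fun x n =>
    x ∈ bal z (en n) ∧ ∀ b, G x (f b x) → f b x ∉ bal z (en n) with hPdef
  have htot : ∀ x, ∃ n, P x n := by
    intro x
    obtain ⟨s, hs1, hs2⟩ := hdeg x
    have hδ : ∃ δ : ℝ, 0 < δ ∧ ∀ v, G x v → δ ≤ dist x v := by
      set T := s.filter (fun v => G x v) with hT
      by_cases hTe : T = ∅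
      · refine ⟨1, one_pos, fun v hv => ?_⟩
        exfalso
        have : v ∈ T := by
          rw [hT, Finset.mem_filter]
          exact ⟨hs1 v hv, hv⟩
        rw [hTe] at this
        simp at this
      · have hTne : T.Nonempty := Finset.nonempty_iff_ne_empty.2 hTe
        set img := T.image (fun v => dist x v) with himg
        have himgne : img.Nonempty := hTne.image _
        refine ⟨img.min' himgne, ?_, ?_⟩
        · obtain ⟨v, hv1, hv2⟩ := Finset.mem_image.1 (img.min'_mem himgne)
          rw [hT, Finset.mem_filter] at hv1
          rw [← hv2]
          rw [dist_pos]
          intro hxv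
          exact hirr x (hxv ▸ hv1.2)
        · intro v hv
          apply Finset.min'_le
          rw [himg, Finset.mem_image]
          refine ⟨v, ?_, rfl⟩
          rw [hT, Finset.mem_filter]
          exact ⟨hs1 v hv, hv⟩
    obtain ⟨δ, hδpos, hδbd⟩ := hδ
    obtain ⟨b, hb1, hb2⟩ := small_ball z hz x (by linarith : (0:ℝ) < δ/4)
    refine ⟨Denumerable.eqv (ℕ × ℕ) b, ?_, ?_⟩
    · rw [hen]
      simp only [Equiv.symm_apply_apply]
      exact mem_ball.2 hb1
    · intro b' hGb' hmem
      rw [hen] at hmem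
      simp only [Equiv.symm_apply_apply] at hmem
      have h1 : dist (f b' x) (z b.1) < rad b.2 := hmem
      have h2 : δ ≤ dist x (f b' x) := hδbd _ hGb'
      have : dist x (f b' x) < δ :=
        calc dist x (f b' x) ≤ dist x (z b.1) + dist (z b.1) (f b' x) := dist_triangle _ _ _
          _ < δ/4 + δ/4 := by
              rw [dist_comm (z _)]
              exact add_lt_add (hb1.trans hb2) (h1.trans hb2)
          _ < δ := by linarith
      linarith
  set c₀ : X → ℕ := fun x => Nat.find (htot x) with hc₀def
  have hPmeas : ∀ n, MeasurableSet {x | P x n} := by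
    intro n
    have heq : {x | P x n} = bal z (en n) ∩
        ⋂ b, ({x | G x (f b x)} ∩ (f b) ⁻¹' (bal z (en n)))ᶜ := by
      ext x
      simp only [hPdef, Set.mem_setOf_eq, Set.mem_inter_iff, Set.mem_iInter, Set.mem_compl_iff,
        Set.mem_preimage]
      constructor
      · rintro ⟨h1, h2⟩
        exact ⟨h1, fun b hb => (h2 b hb.1) hb.2⟩
      · rintro ⟨h1, h2⟩
        exact ⟨h1, fun b hgb hmem => h2 b ⟨hgb, hmem⟩⟩
    rw [heq]
    exact (isOpen_ball.measurableSet).inter (MeasurableSet.iInter fun b =>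
      ((hGb b).inter ((hf b) isOpen_ball.measurableSet)).compl)
  have hc₀meas : Measurable c₀ := by
    apply measurable_to_countable'
    intro n
    have heq : c₀ ⁻¹' {n} = {x | P x n} ∩ ⋂ (m : ℕ), ⋂ (_ : m < n), {x | P x m}ᶜ := by
      ext x
      simp only [Set.mem_preimage, Set.mem_singleton_iff, hc₀def, Nat.find_eq_iff,
        Set.mem_inter_iff, Set.mem_setOf_eq, Set.mem_iInter, Set.mem_compl_iff]
    rw [heq]
    exact (hPmeas n).inter (MeasurableSet.iInter fun m => MeasurableSet.iInter fun _ =>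
      (hPmeas m).compl)
  have hP₀ : ∀ x, P x (c₀ x) := fun x => Nat.find_spec (htot x)
  have hc₀ne : ∀ x y, G x y → c₀ x ≠ c₀ y := by
    intro x y h hEq
    obtain ⟨b, hb⟩ := hcov x y h
    have hGfb : G x (f b x) := by rw [hb]; exact h
    have hyout : f b x ∉ bal z (en (c₀ x)) := (hP₀ x).2 b hGfb
    have hyin : y ∈ bal z (en (c₀ y)) := (hP₀ y).1
    rw [← hEq] at hyin
    rw [hb] at hyout
    exact hyout hyin
  -- the finset of allowed colors
  set A : (X → Fin (k+1)) → X → Finset (Fin (k+1)) := fun g x =>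
    Finset.univ.filter (fun i => ∀ b, G x (f b x) → c₀ (f b x) < c₀ x → g (f b x) ≠ i)
    with hA
  have hAne : ∀ g x, (A g x).Nonempty := by
    intro g x
    obtain ⟨s, hs1, hs2⟩ := hdeg x
    set img := (s.filter (fun v => G x v)).image g with himg
    have hex : ∃ i : Fin (k+1), i ∉ img := by
      by_contra hall
      push_neg at hall
      have hsub : (Finset.univ : Finset (Fin (k+1))) ⊆ img := fun i _ => hall i
      have h1 : k + 1 ≤ img.card := by
        have := Finset.card_le_card hsub
        simpa using this
      have h2 : img.card ≤ (s.filter (fun v => G x v)).card := Finset.card_image_le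
      have h3 : (s.filter (fun v => G x v)).card ≤ s.card := Finset.card_filter_le _ _
      omega
    obtain ⟨i, hi⟩ := hex
    refine ⟨i, ?_⟩
    rw [hA, Finset.mem_filter]
    refine ⟨Finset.mem_univ _, fun b hGfb hlt hEq => ?_⟩
    apply hi
    rw [himg, Finset.mem_image]
    refine ⟨f b x, ?_, hEq⟩
    rw [Finset.mem_filter]
    exact ⟨hs1 _ hGfb, hGfb⟩
  set pick : (X → Fin (k+1)) → X → Fin (k+1) := fun g x => (A g x).min' (hAne g x) with hpick
  have hpick_mem : ∀ g x, pick g x ∈ A g x := fun g x => (A g x).min'_mem _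
  have hpick_meas : ∀ g : X → Fin (k+1), Measurable g → Measurable (pick g) := by
    intro g hg
    have hS : ∀ i : Fin (k+1), MeasurableSet {x | i ∈ A g x} := by
      intro i
      have heq : {x | i ∈ A g x} =
          ⋂ b, ({x | G x (f b x)} ∩ {x | c₀ (f b x) < c₀ x} ∩ {x | g (f b x) = i})ᶜ := by
        ext x
        simp only [hA, Finset.mem_filter, Finset.mem_univ, true_and, Set.mem_setOf_eq,
          Set.mem_iInter, Set.mem_compl_iff, Set.mem_inter_iff]
        constructor
        · intro hcond b hb
          exact hcond b hb.1.1 hb.1.2 hb.2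
        · intro hcond b h1 h2 h3
          exact hcond b ⟨⟨h1, h2⟩, h3⟩
      rw [heq]
      refine MeasurableSet.iInter fun b => MeasurableSet.compl ?_
      refine MeasurableSet.inter (MeasurableSet.inter (hGb b) ?_) ?_
      · have heq2 : {x | c₀ (f b x) < c₀ x} =
            ⋃ (n : ℕ), (⋃ (m : ℕ) (_ : m < n), (fun x => c₀ (f b x)) ⁻¹' {m}) ∩ c₀ ⁻¹' {n} := by
          ext x
          simp only [Set.mem_setOf_eq, Set.mem_iUnion, Set.mem_inter_iff, Set.mem_preimage,
            Set.mem_singleton_iff]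
          constructor
          · intro h
            exact ⟨c₀ x, ⟨c₀ (f b x), h, rfl⟩, rfl⟩
          · rintro ⟨n, ⟨m, hmn, hm⟩, hn⟩
            omega
        rw [heq2]
        refine MeasurableSet.iUnion fun n => MeasurableSet.inter ?_ (hc₀meas (by
          exact measurableSet_singleton n))
        exact MeasurableSet.iUnion fun m => MeasurableSet.iUnion fun _ =>
          (hc₀meas.comp (hf b)) (measurableSet_singleton m)
      · exact (hg.comp (hf b)) (measurableSet_singleton i)
    apply measurable_to_countable'
    intro i
    have heq : pick g ⁻¹' {i} =
        {x | i ∈ A g x} ∩ ⋂ (j : Fin (k+1)), ⋂ (_ : j < i), {x | j ∈ A g x}ᶜ := by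
      ext x
      simp only [Set.mem_preimage, Set.mem_singleton_iff, Set.mem_inter_iff, Set.mem_setOf_eq,
        Set.mem_iInter, Set.mem_compl_iff]
      constructor
      · intro hEq
        refine ⟨hEq ▸ hpick_mem g x, fun j hj hjA => ?_⟩
        have h' : pick g x ≤ j := Finset.min'_le _ j hjA
        rw [← hEq] at hj
        exact absurd h' (not_le.2 hj)
      · rintro ⟨hiA, hlt⟩
        have h1 : pick g x ≤ i := Finset.min'_le _ i hiA
        rcases lt_or_eq_of_le h1 with h2 | h2
        · exact absurd (hpick_mem g x) (hlt _ h2)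
        · exact h2
    rw [heq]
    exact (hS i).inter (MeasurableSet.iInter fun j => MeasurableSet.iInter fun _ => (hS j).compl)
  -- the stage colorings, by recursion
  have hΓex : ∃ Γ : ℕ → X → Fin (k+1), (Γ 0 = fun _ => 0) ∧ ∀ n x, Γ (n+1) x =
      if c₀ x < n then Γ n x else if c₀ x = n then pick (Γ n) x else 0 :=
    ⟨fun n => Nat.rec (fun _ => (0 : Fin (k+1)))
      (fun n prev x => if c₀ x < n then prev x else if c₀ x = n then pick prev x else 0) n,
      rfl, fun n x => rfl⟩
  obtain ⟨Γ, hΓ0, hΓsucc⟩ := hΓex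
  have hΓmeas : ∀ n, Measurable (Γ n) := by
    intro n
    induction n with
    | zero => rw [hΓ0]; exact measurable_const
    | succ n ih =>
      apply measurable_to_countable'
      intro i
      have hlt : MeasurableSet {x | c₀ x < n} := by
        have heq : {x | c₀ x < n} = ⋃ (m : ℕ) (_ : m < n), c₀ ⁻¹' {m} := by
          ext x; simp
        rw [heq]
        exact MeasurableSet.iUnion fun m => MeasurableSet.iUnion fun _ =>
          hc₀meas (measurableSet_singleton m)
      have heqn : MeasurableSet {x | c₀ x = n} := hc₀meas (measurableSet_singleton n)
      have heq : Γ (n+1) ⁻¹' {i} =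
          ({x | c₀ x < n} ∩ Γ n ⁻¹' {i}) ∪ ({x | c₀ x = n} ∩ pick (Γ n) ⁻¹' {i}) ∪
          ({x | c₀ x < n}ᶜ ∩ {x | c₀ x = n}ᶜ ∩ {x | (0 : Fin (k+1)) = i}) := by
        ext x
        simp only [Set.mem_preimage, Set.mem_singleton_iff, Set.mem_union, Set.mem_inter_iff,
          Set.mem_setOf_eq, Set.mem_compl_iff, hΓsucc]
        by_cases h1 : c₀ x < n
        · have h2 : c₀ x ≠ n := by omega
          simp [h1, h2]
        · by_cases h2 : c₀ x = n
          · simp [h1, h2]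
          · simp [h1, h2, eq_comm]
      rw [heq]
      have hconst : MeasurableSet {x : X | (0 : Fin (k+1)) = i} := by
        by_cases h : (0 : Fin (k+1)) = i
        · have heq2 : {x : X | (0 : Fin (k+1)) = i} = Set.univ := by ext x; simp [h]
          rw [heq2]; exact MeasurableSet.univ
        · have heq2 : {x : X | (0 : Fin (k+1)) = i} = ∅ := by ext x; simp [h]
          rw [heq2]; exact MeasurableSet.empty
      exact ((hlt.inter (ih (measurableSet_singleton i))).union
        (heqn.inter ((hpick_meas _ ih) (measurableSet_singleton i)))).union
        ((hlt.compl.inter heqn.compl).inter hconst)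
  have hstab : ∀ (x : X) (n : ℕ), c₀ x + 1 ≤ n → Γ n x = Γ (c₀ x + 1) x := by
    intro x n
    induction n with
    | zero => intro h; omega
    | succ n ih =>
      intro h
      rcases Nat.lt_or_ge (c₀ x) n with h1 | h2
      · rw [hΓsucc, if_pos h1]
        exact ih (by omega)
      · have hn : c₀ x = n := by omega
        subst hn
        rfl
  have hval : ∀ x : X, Γ (c₀ x + 1) x = pick (Γ (c₀ x)) x := by
    intro x
    rw [hΓsucc, if_neg (lt_irrefl _), if_pos rfl]
  have hcmeas : Measurable (fun x => Γ (c₀ x + 1) x) := by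
    apply measurable_to_countable'
    intro i
    have heq : (fun x => Γ (c₀ x + 1) x) ⁻¹' {i} = ⋃ n, c₀ ⁻¹' {n} ∩ Γ (n+1) ⁻¹' {i} := by
      ext x
      simp only [Set.mem_preimage, Set.mem_singleton_iff, Set.mem_iUnion, Set.mem_inter_iff]
      constructor
      · intro h; exact ⟨c₀ x, rfl, h⟩
      · rintro ⟨n, hn, h⟩
        rw [hn]
        exact h
    rw [heq]
    exact MeasurableSet.iUnion fun n => (hc₀meas (measurableSet_singleton n)).inter
      ((hΓmeas (n+1)) (measurableSet_singleton i))
  have hclaim : ∀ x y, G x y → c₀ y < c₀ x → Γ (c₀ y + 1) y ≠ Γ (c₀ x + 1) x := by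
    intro x y h hlt
    obtain ⟨b, hb⟩ := hcov x y h
    have hGfb : G x (f b x) := by rw [hb]; exact h
    have hmem := hpick_mem (Γ (c₀ x)) x
    simp only [hA, Finset.mem_filter, Finset.mem_univ, true_and] at hmem
    have hcond := hmem b hGfb (by rw [hb]; exact hlt)
    rw [hb] at hcond
    rw [hstab y (c₀ x) (by omega)] at hcond
    rw [hval x]
    exact hcond
  refine ⟨fun x => Γ (c₀ x + 1) x, hcmeas, ?_⟩
  intro x y h
  rcases Nat.lt_or_ge (c₀ y) (c₀ x) with h1 | h2
  · exact (hclaim x y h h1).symm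
  · have h1 : c₀ x < c₀ y := by
      have := hc₀ne x y h
      omega
    exact hclaim y x (hsym h) h1

end Coloring

/-- A Borel graph on a Polish space all of whose degrees are at most `k`
admits a Borel proper `(k+1)`-coloring. -/
theorem stmt1 {X : Type} [TopologicalSpace X] [PolishSpace X]
    [MeasurableSpace X] [BorelSpace X]
    (G : X → X → Prop) (hsym : Symmetric G) (hirr : Irreflexive G)
    (hBorel : MeasurableSet {p : X × X | G p.1 p.2}) (k : ℕ)
    (hdeg : ∀ x, ∃ s : Finset X, (∀ y, G x y → y ∈ s) ∧ s.card ≤ k) :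
    ∃ c : X → Fin (k + 1), Measurable c ∧ ∀ x y, G x y → c x ≠ c y := by
  rcases isEmpty_or_nonempty X with hX | hX
  · exact ⟨fun _ => 0, measurable_const, fun x => (IsEmpty.false x).elim⟩
  · letI := TopologicalSpace.upgradeIsCompletelyMetrizable X
    obtain ⟨f, hf, hcov⟩ := exists_nbhd_funs G k hBorel hdeg
    exact coloring_exists G hsym hirr hBorel k hdeg _
      (TopologicalSpace.denseRange_denseSeq X) f hf hcov
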